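/- Let f : ℝ^d → ℝ be twice continuously differentiable with L1-Lipschitz gradient and L2-Lipschitz Hessian, let α ∈ (0,1], ε₁ ∈ (0,1), ε₂ = ε₁^α, and let x₀ satisfy f(x₀) − inf f ≤ Δ < ∞. Suppose x₁ = x₀ and (v_j) are unit vectors such that for every j: (i) λ_min(∇²f(x_j)) ≥ v_jᵀ∇²f(x_j)v_j − max(ε₂, ‖∇f(x_j)‖^{2/3})/2 and v_jᵀ∇²f(x_j)v_j ≤ 0; (ii) x_{j+1} = x_j − (2·|v_jᵀ∇²f(x_j)v_j|/L2)·sign(v_jᵀ∇f(x_j))·v_j if 2·|v_jᵀ∇²f(x_j)v_j|³/(3·L2²) > ‖∇f(x_j)‖²/(2·L1), and x_{j+1} = x_j − (1/L1)·∇f(x_j) otherwise. Then the first index j* with v_{j*}ᵀ∇²f(x_{j*})v_{j*} > −ε₂/2 and ‖∇f(x_{j*})‖ ≤ ε₁^{3α/2} satisfies j* ≤ 1 + (max(12·L2², 2·L1)/ε₁^{3α})·(f(x₁) − f(x_{j*})) ≤ 1 + (max(12·L2², 2·L1)/ε₁^{3α})·Δ, and at termination λ_min(∇²f(x_{j*}))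 ≥ −ε₂. -/

import Mathlib

open scoped RealInnerProductSpace
open Set

variable {E : Type*} [NormedAddCommGroup E] [InnerProductSpace ℝ E] [CompleteSpace E]

lemma grad_contDiff {f : E → ℝ} (hf : ContDiff ℝ 2 f) : ContDiff ℝ 1 (gradient f) := by
  have h1 : ContDiff ℝ 1 (fderiv ℝ f) := hf.fderiv_right (by norm_num)
  exact ((InnerProductSpace.toDual ℝ E).symm.contDiff).comp h1

lemma hasDerivAt_comp_line {f : E → ℝ} (hf : Differentiable ℝ f) (x h : E) (t : ℝ) :
    HasDerivAt (fun s => f (x + s • h)) ⟪gradient f (x + t • h), h⟫ t := by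
  have hline : HasDerivAt (fun s : ℝ => x + s • h) h t := by
    simpa using ((hasDerivAt_id t).smul_const h).const_add x
  have hg : HasGradientAt f (gradient f (x + t • h)) (x + t • h) :=
    (hf (x + t • h)).hasGradientAt
  have := (hasGradientAt_iff_hasFDerivAt.mp hg).comp_hasDerivAt t hline
  exact this.congr_deriv (by rw [InnerProductSpace.toDual_apply_apply])

lemma hasDerivAt_grad_line {f : E → ℝ} (hf : ContDiff ℝ 2 f) (x h : E) (t : ℝ) :
    HasDerivAt (fun s => gradient f (x + s • h))
      ((fderiv ℝ (gradient f) (x + t • h)) h) t := by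
  have hline : HasDerivAt (fun s : ℝ => x + s • h) h t := by
    simpa using ((hasDerivAt_id t).smul_const h).const_add x
  exact (((grad_contDiff hf).differentiable (by norm_num) (x + t • h)).hasFDerivAt).comp_hasDerivAt
    t hline

lemma grad_taylor {f : E → ℝ} {L2 : ℝ} (hf : ContDiff ℝ 2 f)
    (hHlip : ∀ a b : E, ‖fderiv ℝ (gradient f) a - fderiv ℝ (gradient f) b‖ ≤ L2 * ‖a - b‖)
    (x h : E) :
    ‖gradient f (x + h) - gradient f x - (fderiv ℝ (gradient f) x) h‖ ≤ L2 / 2 * ‖h‖ ^ 2 := by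
  set H := fderiv ℝ (gradient f) x with hH
  set G : ℝ → E := fun t => gradient f (x + t • h) - gradient f x - t • H h with hGdef
  have hG' : ∀ t : ℝ, HasDerivAt G ((fderiv ℝ (gradient f) (x + t • h) - H) h) t := by
    intro t
    have h1 := hasDerivAt_grad_line hf x h t
    have h2 : HasDerivAt (fun s : ℝ => s • H h) (H h) t := by
      simpa using (hasDerivAt_id t).smul_const (H h)
    have := (h1.sub_const (gradient f x)).sub h2
    exact this
  have key := image_norm_le_of_norm_deriv_right_le_deriv_boundary
    (f := G) (f' := fun t => (fderiv ℝ (gradient f) (x + t • h) - H) h) (a := 0) (b := 1)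
    (fun t _ => (hG' t).continuousAt.continuousWithinAt)
    (fun t ht => (hG' t).hasDerivWithinAt)
    (B := fun t => L2 * ‖h‖ ^ 2 * t ^ 2 / 2) (B' := fun t => L2 * ‖h‖ ^ 2 * t)
    (by simp [hGdef])
    (fun t => by
      have : HasDerivAt (fun s : ℝ => L2 * ‖h‖ ^ 2 * s ^ 2 / 2) (L2 * ‖h‖ ^ 2 * t) t := by
        have := ((hasDerivAt_pow 2 t).const_mul (L2 * ‖h‖ ^ 2)).div_const 2
        exact this.congr_deriv (by ring)
      exact this)
    (fun t ht => by
      have h1 : ‖(fderiv ℝ (gradient f) (x + t • h) - H) h‖ ≤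
          ‖fderiv ℝ (gradient f) (x + t • h) - H‖ * ‖h‖ :=
        ContinuousLinearMap.le_opNorm _ _
      have h2 : ‖fderiv ℝ (gradient f) (x + t • h) - H‖ ≤ L2 * ‖t • h‖ := by
        simpa using hHlip (x + t • h) x
      have h3 : ‖t • h‖ = t * ‖h‖ := by
        rw [norm_smul, Real.norm_eq_abs, abs_of_nonneg ht.1]
      calc ‖(fderiv ℝ (gradient f) (x + t • h) - H) h‖
          ≤ L2 * ‖t • h‖ * ‖h‖ := le_trans h1 (by
            apply mul_le_mul_of_nonneg_right h2 (norm_nonneg _))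
        _ = L2 * ‖h‖ ^ 2 * t := by rw [h3]; ring)
  have := key (x := 1) (by norm_num)
  rw [show L2 / 2 * ‖h‖ ^ 2 = L2 * ‖h‖ ^ 2 * 1 ^ 2 / 2 by ring]
  simpa [hGdef] using this

lemma cubic_upper {f : E → ℝ} {L2 : ℝ} (hf : ContDiff ℝ 2 f)
    (hHlip : ∀ a b : E, ‖fderiv ℝ (gradient f) a - fderiv ℝ (gradient f) b‖ ≤ L2 * ‖a - b‖)
    (x h : E) :
    f (x + h) ≤ f x + ⟪gradient f x, h⟫ + (1 : ℝ) / 2 * ⟪(fderiv ℝ (gradient f) x) h, h⟫ +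
      L2 / 6 * ‖h‖ ^ 3 := by
  have hdiff : Differentiable ℝ f := hf.differentiable (by norm_num)
  set g := gradient f x with hg
  set H := fderiv ℝ (gradient f) x with hH
  set F : ℝ → ℝ := fun t => f (x + t • h) - f x - t * ⟪g, h⟫ - t ^ 2 / 2 * ⟪H h, h⟫ with hFdef
  have hF' : ∀ t : ℝ, HasDerivAt F
      (⟪gradient f (x + t • h) - g - t • H h, h⟫) t := by
    intro t
    have h1 := hasDerivAt_comp_line hdiff x h t
    have h2 : HasDerivAt (fun s : ℝ => s * ⟪g, h⟫) ⟪g, h⟫ t := by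
      simpa using (hasDerivAt_id t).mul_const (⟪g, h⟫)
    have h3 : HasDerivAt (fun s : ℝ => s ^ 2 / 2 * ⟪H h, h⟫) (t * ⟪H h, h⟫) t := by
      have := ((hasDerivAt_pow 2 t).div_const 2).mul_const (⟪H h, h⟫)
      exact this.congr_deriv (by ring)
    have := ((h1.sub_const (f x)).sub h2).sub h3
    exact this.congr_deriv (by rw [inner_sub_left, inner_sub_left, real_inner_smul_left])
  have key := image_norm_le_of_norm_deriv_right_le_deriv_boundary
    (f := F) (f' := fun t => ⟪gradient f (x + t • h) - g - t • H h, h⟫) (a := 0) (b := 1)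
    (fun t _ => (hF' t).continuousAt.continuousWithinAt)
    (fun t ht => (hF' t).hasDerivWithinAt)
    (B := fun t => L2 * ‖h‖ ^ 3 * t ^ 3 / 6) (B' := fun t => L2 * ‖h‖ ^ 3 * t ^ 2 / 2)
    (by simp [hFdef])
    (fun t => by
      have := ((hasDerivAt_pow 3 t).const_mul (L2 * ‖h‖ ^ 3)).div_const 6
      exact this.congr_deriv (by ring))
    (fun t ht => by
      have h1 : ‖gradient f (x + t • h) - g - t • H h‖ ≤ L2 / 2 * ‖t • h‖ ^ 2 := by
        have := grad_taylor hf hHlip x (t • h)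
        rw [← hH, map_smul, ← hg] at this
        exact this
      have h2 : |⟪gradient f (x + t • h) - g - t • H h, h⟫| ≤
          ‖gradient f (x + t • h) - g - t • H h‖ * ‖h‖ := abs_real_inner_le_norm _ _
      have h3 : ‖t • h‖ = t * ‖h‖ := by
        rw [norm_smul, Real.norm_eq_abs, abs_of_nonneg ht.1]
      calc ‖⟪gradient f (x + t • h) - g - t • H h, h⟫‖
          ≤ (L2 / 2 * ‖t • h‖ ^ 2) * ‖h‖ := le_trans h2
            (mul_le_mul_of_nonneg_right h1 (norm_nonneg _))
        _ = L2 * ‖h‖ ^ 3 * t ^ 2 / 2 := by rw [h3]; ring)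
  have hkey := key (x := 1) (by norm_num)
  have h1 : |F 1| ≤ L2 * ‖h‖ ^ 3 / 6 := by
    have : (L2 * ‖h‖ ^ 3 * 1 ^ 3 / 6 : ℝ) = L2 * ‖h‖ ^ 3 / 6 := by ring
    simpa [Real.norm_eq_abs, this] using hkey
  have h2 : F 1 ≤ L2 * ‖h‖ ^ 3 / 6 := le_trans (le_abs_self _) h1
  simp only [hFdef, one_smul, one_pow, one_mul] at h2
  linarith

lemma descent_upper {f : E → ℝ} {L1 : ℝ} (hf : ContDiff ℝ 2 f)
    (hglip : ∀ a b : E, ‖gradient f a - gradient f b‖ ≤ L1 * ‖a - b‖)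
    (x h : E) :
    f (x + h) ≤ f x + ⟪gradient f x, h⟫ + L1 / 2 * ‖h‖ ^ 2 := by
  have hdiff : Differentiable ℝ f := hf.differentiable (by norm_num)
  set g := gradient f x with hg
  set F : ℝ → ℝ := fun t => f (x + t • h) - f x - t * ⟪g, h⟫ with hFdef
  have hF' : ∀ t : ℝ, HasDerivAt F (⟪gradient f (x + t • h) - g, h⟫) t := by
    intro t
    have h1 := hasDerivAt_comp_line hdiff x h t
    have h2 : HasDerivAt (fun s : ℝ => s * ⟪g, h⟫) ⟪g, h⟫ t := by
      simpa using (hasDerivAt_id t).mul_const (⟪g, h⟫)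
    have := (h1.sub_const (f x)).sub h2
    exact this.congr_deriv (by rw [inner_sub_left])
  have key := image_norm_le_of_norm_deriv_right_le_deriv_boundary
    (f := F) (f' := fun t => ⟪gradient f (x + t • h) - g, h⟫) (a := 0) (b := 1)
    (fun t _ => (hF' t).continuousAt.continuousWithinAt)
    (fun t ht => (hF' t).hasDerivWithinAt)
    (B := fun t => L1 * ‖h‖ ^ 2 * t ^ 2 / 2) (B' := fun t => L1 * ‖h‖ ^ 2 * t)
    (by simp [hFdef])
    (fun t => by
      have := ((hasDerivAt_pow 2 t).const_mul (L1 * ‖h‖ ^ 2)).div_const 2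
      exact this.congr_deriv (by ring))
    (fun t ht => by
      have h1 : ‖gradient f (x + t • h) - g‖ ≤ L1 * ‖t • h‖ := by
        simpa using hglip (x + t • h) x
      have h2 : |⟪gradient f (x + t • h) - g, h⟫| ≤
          ‖gradient f (x + t • h) - g‖ * ‖h‖ := abs_real_inner_le_norm _ _
      have h3 : ‖t • h‖ = t * ‖h‖ := by
        rw [norm_smul, Real.norm_eq_abs, abs_of_nonneg ht.1]
      calc ‖⟪gradient f (x + t • h) - g, h⟫‖
          ≤ (L1 * ‖t • h‖) * ‖h‖ := le_trans h2
            (mul_le_mul_of_nonneg_right h1 (norm_nonneg _))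
        _ = L1 * ‖h‖ ^ 2 * t := by rw [h3]; ring)
  have hkey := key (x := 1) (by norm_num)
  have h1 : |F 1| ≤ L1 * ‖h‖ ^ 2 / 2 := by
    have : (L1 * ‖h‖ ^ 2 * 1 ^ 2 / 2 : ℝ) = L1 * ‖h‖ ^ 2 / 2 := by ring
    simpa [Real.norm_eq_abs, this] using hkey
  have h2 : F 1 ≤ L1 * ‖h‖ ^ 2 / 2 := le_trans (le_abs_self _) h1
  simp only [hFdef, one_smul, one_pow, one_mul] at h2
  linarith

noncomputable def sgn (t : ℝ) : ℝ := if 0 ≤ t then 1 else -1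

lemma sgn_mul_self (t : ℝ) : sgn t * t = |t| := by
  unfold sgn; split
  · simp [abs_of_nonneg ‹_›]
  · rw [abs_of_neg (lt_of_not_ge ‹_›)]; ring

lemma sgn_sq (t : ℝ) : sgn t ^ 2 = 1 := by
  unfold sgn; split <;> norm_num

lemma abs_sgn (t : ℝ) : |sgn t| = 1 := by
  unfold sgn; split <;> norm_num

lemma curvature_step {f : E → ℝ} {L2 : ℝ} (hL2 : 0 < L2) (hf : ContDiff ℝ 2 f)
    (hHlip : ∀ a b : E, ‖fderiv ℝ (gradient f) a - fderiv ℝ (gradient f) b‖ ≤ L2 * ‖a - b‖)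
    (x v : E) (hv : ‖v‖ = 1)
    (hneg : ⟪(fderiv ℝ (gradient f) x) v, v⟫ ≤ 0) :
    f (x - ((2 * |⟪(fderiv ℝ (gradient f) x) v, v⟫| / L2) * sgn ⟪gradient f x, v⟫) • v) ≤
      f x - 2 * |⟪(fderiv ℝ (gradient f) x) v, v⟫| ^ 3 / (3 * L2 ^ 2) := by
  set lam := ⟪(fderiv ℝ (gradient f) x) v, v⟫ with hlam
  set s := ⟪gradient f x, v⟫ with hs
  set c := (2 * |lam| / L2) * sgn s with hc
  have hrw : x - c • v = x + (-c) • v := by rw [neg_smul, ← sub_eq_add_neg]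
  rw [hrw]
  have hup := cubic_upper hf hHlip x ((-c) • v)
  have e1 : ⟪gradient f x, (-c) • v⟫ ≤ 0 := by
    rw [real_inner_smul_right, ← hs, hc]
    have h1 : sgn s * s = |s| := sgn_mul_self s
    have h2 : 0 ≤ 2 * |lam| / L2 := div_nonneg (by positivity) hL2.le
    calc -(2 * |lam| / L2 * sgn s) * s = -(2 * |lam| / L2 * (sgn s * s)) := by ring
      _ = -(2 * |lam| / L2 * |s|) := by rw [h1]
      _ ≤ 0 := neg_nonpos_of_nonneg (mul_nonneg h2 (abs_nonneg s))
  have e2 : ⟪(fderiv ℝ (gradient f) x) ((-c) • v), (-c) • v⟫ = c ^ 2 * lam := by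
    rw [map_smul, real_inner_smul_left, real_inner_smul_right, ← hlam]; ring
  have e3 : ‖(-c) • v‖ = 2 * |lam| / L2 := by
    rw [norm_smul, hv, mul_one, Real.norm_eq_abs, abs_neg, hc, abs_mul, abs_sgn, mul_one,
      abs_of_nonneg (div_nonneg (by positivity) hL2.le)]
  have hcsq : c ^ 2 = 4 * |lam| ^ 2 / L2 ^ 2 := by
    rw [hc, mul_pow, sgn_sq, mul_one, div_pow]; ring
  have hlamneg : lam = -|lam| := by rw [abs_of_nonpos hneg, neg_neg]
  rw [e2, e3] at hup
  have hkey : (1 : ℝ) / 2 * (c ^ 2 * lam) + L2 / 6 * (2 * |lam| / L2) ^ 3 =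
      -(2 * |lam| ^ 3 / (3 * L2 ^ 2)) := by
    rw [hcsq, show lam = -|lam| from hlamneg]
    field_simp
    rw [abs_neg, abs_abs]
    ring
  linarith

lemma gradient_step {f : E → ℝ} {L1 : ℝ} (hL1 : 0 < L1) (hf : ContDiff ℝ 2 f)
    (hglip : ∀ a b : E, ‖gradient f a - gradient f b‖ ≤ L1 * ‖a - b‖)
    (x : E) :
    f (x - (1 / L1) • gradient f x) ≤ f x - ‖gradient f x‖ ^ 2 / (2 * L1) := by
  have hrw : x - (1 / L1) • gradient f x = x + (-(1 / L1)) • gradient f x := by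
    rw [neg_smul, ← sub_eq_add_neg]
  rw [hrw]
  have hup := descent_upper hf hglip x ((-(1 / L1)) • gradient f x)
  have e1 : ⟪gradient f x, (-(1 / L1)) • gradient f x⟫ = -(1 / L1) * ‖gradient f x‖ ^ 2 := by
    rw [real_inner_smul_right, real_inner_self_eq_norm_sq]
  have e3 : ‖(-(1 / L1)) • gradient f x‖ = (1 / L1) * ‖gradient f x‖ := by
    rw [norm_smul, Real.norm_eq_abs, abs_neg, abs_of_nonneg (by positivity : (0:ℝ) ≤ 1 / L1)]
  rw [e1, e3] at hup
  have hkey : -(1 / L1) * ‖gradient f x‖ ^ 2 + L1 / 2 * ((1 / L1) * ‖gradient f x‖) ^ 2 =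
      -(‖gradient f x‖ ^ 2 / (2 * L1)) := by
    field_simp
    ring
  linarith

/-- Corollary on NCG-A2 as a subroutine of NCG-B2: running NCG-A2 with
accuracies `(ε₁^{3α/2}, 2/3)` returns a point whose Hessian has smallest eigenvalue
`≥ -ε₂` where `ε₂ = ε₁^α`. -/
theorem NCG_A2_subroutine_guarantee {d : ℕ}
    (f : EuclideanSpace ℝ (Fin d) → ℝ) (L1 L2 α ε₁ ε₂ Δ : ℝ)
    (hL1 : 0 < L1) (hL2 : 0 < L2)
    (hα : 0 < α) (hα1 : α ≤ 1)
    (hε₁ : 0 < ε₁) (hε₁1 : ε₁ < 1)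
    (hε₂ : ε₂ = ε₁ ^ α)
    (hf : ContDiff ℝ 2 f)
    (hglip : ∀ a b : EuclideanSpace ℝ (Fin d),
      ‖gradient f a - gradient f b‖ ≤ L1 * ‖a - b‖)
    (hHlip : ∀ a b : EuclideanSpace ℝ (Fin d),
      ‖fderiv ℝ (gradient f) a - fderiv ℝ (gradient f) b‖ ≤ L2 * ‖a - b‖)
    (x₀ : EuclideanSpace ℝ (Fin d))
    (hΔ : ∀ z : EuclideanSpace ℝ (Fin d), f x₀ - f z ≤ Δ)
    (x v : ℕ → EuclideanSpace ℝ (Fin d))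
    (hx1 : x 1 = x₀)
    (hv : ∀ j : ℕ, 1 ≤ j → ‖v j‖ = 1)
    (hvneg : ∀ j : ℕ, 1 ≤ j → ⟪(fderiv ℝ (gradient f) (x j)) (v j), v j⟫ ≤ 0)
    (hmin : ∀ j : ℕ, 1 ≤ j → ∀ u : EuclideanSpace ℝ (Fin d), ‖u‖ = 1 →
      ⟪(fderiv ℝ (gradient f) (x j)) u, u⟫ ≥
        ⟪(fderiv ℝ (gradient f) (x j)) (v j), v j⟫ -
          max ε₂ (‖gradient f (x j)‖ ^ ((2 : ℝ) / 3)) / 2)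
    (hupd : ∀ j : ℕ, 1 ≤ j →
      x (j + 1) =
        if 2 * |⟪(fderiv ℝ (gradient f) (x j)) (v j), v j⟫| ^ 3 / (3 * L2 ^ 2) >
            ‖gradient f (x j)‖ ^ 2 / (2 * L1) then
          x j - ((2 * |⟪(fderiv ℝ (gradient f) (x j)) (v j), v j⟫| / L2) *
            sgn ⟪gradient f (x j), v j⟫) • v j
        else
          x j - (1 / L1) • gradient f (x j)) :
    ∃ jstar : ℕ, 1 ≤ jstar ∧
      (⟪(fderiv ℝ (gradient f) (x jstar)) (v jstar), v jstar⟫ > -ε₂ / 2 ∧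
        ‖gradient f (x jstar)‖ ≤ ε₁ ^ (3 * α / 2)) ∧
      (∀ i : ℕ, 1 ≤ i → i < jstar →
        ¬(⟪(fderiv ℝ (gradient f) (x i)) (v i), v i⟫ > -ε₂ / 2 ∧
          ‖gradient f (x i)‖ ≤ ε₁ ^ (3 * α / 2))) ∧
      (jstar : ℝ) ≤
        1 + (max (12 * L2 ^ 2) (2 * L1) / ε₁ ^ (3 * α)) * (f (x 1) - f (x jstar)) ∧
      (jstar : ℝ) ≤ 1 + (max (12 * L2 ^ 2) (2 * L1) / ε₁ ^ (3 * α)) * Δ ∧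
      ∀ u : EuclideanSpace ℝ (Fin d), ‖u‖ = 1 →
        ⟪(fderiv ℝ (gradient f) (x jstar)) u, u⟫ ≥ -ε₂ := by
  classical
  set M := max (12 * L2 ^ 2) (2 * L1) with hM
  have hMpos : 0 < M := lt_of_lt_of_le (by positivity) (le_max_right _ _)
  have hε3 : (0:ℝ) < ε₁ ^ (3 * α) := Real.rpow_pos_of_pos hε₁ _
  have hε₂pos : 0 < ε₂ := hε₂ ▸ Real.rpow_pos_of_pos hε₁ α
  set δ := ε₁ ^ (3 * α) / M with hδ
  have hδpos : 0 < δ := div_pos hε3 hMpos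
  have hcube : ε₁ ^ (3 * α) = ε₂ ^ 3 := by
    rw [hε₂, ← Real.rpow_natCast (ε₁ ^ α) 3, ← Real.rpow_mul hε₁.le]
    norm_num [mul_comm]
  have hsq : ε₁ ^ (3 * α) = (ε₁ ^ (3 * α / 2)) ^ 2 := by
    rw [← Real.rpow_natCast (ε₁ ^ (3 * α / 2)) 2, ← Real.rpow_mul hε₁.le]
    norm_num
  set T : ℕ → Prop := fun j =>
    (⟪(fderiv ℝ (gradient f) (x j)) (v j), v j⟫ > -ε₂ / 2 ∧
      ‖gradient f (x j)‖ ≤ ε₁ ^ (3 * α / 2)) with hT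
  have hdec : ∀ j : ℕ, 1 ≤ j → ¬ T j → f (x (j + 1)) + δ ≤ f (x j) := by
    intro j hj hnT
    have hxj := hupd j hj
    set lam := ⟪(fderiv ℝ (gradient f) (x j)) (v j), v j⟫ with hlamd
    set g := gradient f (x j) with hgd
    have hmax : f (x (j + 1)) ≤
        f (x j) - max (2 * |lam| ^ 3 / (3 * L2 ^ 2)) (‖g‖ ^ 2 / (2 * L1)) := by
      by_cases hcond : 2 * |lam| ^ 3 / (3 * L2 ^ 2) > ‖g‖ ^ 2 / (2 * L1)
      · rw [hxj, if_pos hcond, max_eq_left hcond.le]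
        exact curvature_step hL2 hf hHlip (x j) (v j) (hv j hj) (hvneg j hj)
      · rw [hxj, if_neg hcond, max_eq_right (not_lt.mp hcond)]
        exact gradient_step hL1 hf hglip (x j)
    have hδle : δ ≤ max (2 * |lam| ^ 3 / (3 * L2 ^ 2)) (‖g‖ ^ 2 / (2 * L1)) := by
      simp only [hT] at hnT
      push_neg at hnT
      by_cases hl : lam > -ε₂ / 2
      · have hgbig : ε₁ ^ (3 * α / 2) < ‖g‖ := hnT hl
        have h2 : ε₁ ^ (3 * α) ≤ ‖g‖ ^ 2 := by
          rw [hsq]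
          exact pow_le_pow_left₀ (Real.rpow_pos_of_pos hε₁ _).le hgbig.le 2
        have hstep1 : δ ≤ ε₁ ^ (3 * α) / (2 * L1) := by
          rw [hδ]
          exact div_le_div_of_nonneg_left hε3.le (by positivity) (le_max_right _ _)
        have hstep2 : ε₁ ^ (3 * α) / (2 * L1) ≤ ‖g‖ ^ 2 / (2 * L1) :=
          (div_le_div_iff_of_pos_right (by positivity)).mpr h2
        exact le_trans (le_trans hstep1 hstep2) (le_max_right _ _)
      · have hl' : lam ≤ -ε₂ / 2 := not_lt.mp hl
        have habs : ε₂ / 2 ≤ |lam| := by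
          rw [abs_of_nonpos (hvneg j hj)]
          linarith
        have h3 : ε₁ ^ (3 * α) ≤ 8 * |lam| ^ 3 := by
          rw [hcube]
          have := pow_le_pow_left₀ (by positivity : (0:ℝ) ≤ ε₂ / 2) habs 3
          have h4 : (ε₂ / 2) ^ 3 = ε₂ ^ 3 / 8 := by ring
          rw [h4] at this
          linarith
        have hstep1 : δ ≤ ε₁ ^ (3 * α) / (12 * L2 ^ 2) := by
          rw [hδ]
          exact div_le_div_of_nonneg_left hε3.le (by positivity) (le_max_left _ _)
        have hstep2 : ε₁ ^ (3 * α) / (12 * L2 ^ 2) ≤ 2 * |lam| ^ 3 / (3 * L2 ^ 2) := by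
          rw [show 2 * |lam| ^ 3 / (3 * L2 ^ 2) = 8 * |lam| ^ 3 / (12 * L2 ^ 2) by ring]
          exact (div_le_div_iff_of_pos_right (by positivity)).mpr h3
        exact le_trans (le_trans hstep1 hstep2) (le_max_left _ _)
    linarith [le_max_left (2 * |lam| ^ 3 / (3 * L2 ^ 2)) (‖g‖ ^ 2 / (2 * L1))]
  have htel : ∀ n : ℕ, (∀ i, 1 ≤ i → i ≤ n → ¬ T i) →
      f (x (n + 1)) + (n : ℝ) * δ ≤ f (x 1) := by
    intro n
    induction n with
    | zero => intro _; simp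
    | succ n ih =>
      intro hn
      have h1 := hdec (n + 1) (by omega) (hn (n + 1) (by omega) le_rfl)
      have h2 := ih (fun i h1i h2i => hn i h1i (by omega))
      push_cast
      push_cast at h2
      linarith
  have hex : ∃ j, 1 ≤ j ∧ T j := by
    by_contra hcon
    push_neg at hcon
    obtain ⟨n, hn⟩ := exists_nat_gt (Δ / δ)
    have h1 := htel n (fun i hi _ => hcon i hi)
    have h2 : f (x 1) - f (x (n + 1)) ≤ Δ := by rw [hx1]; exact hΔ _
    have h3 : (n : ℝ) ≤ Δ / δ := by
      rw [le_div_iff₀ hδpos]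
      linarith
    linarith
  set jstar := Nat.find hex with hjs
  obtain ⟨hj1, hjT⟩ := Nat.find_spec hex
  have hmin' : ∀ i, 1 ≤ i → i < jstar → ¬ T i := fun i h1i h2i hTi =>
    Nat.find_min hex h2i ⟨h1i, hTi⟩
  have htb : f (x jstar) + ((jstar : ℝ) - 1) * δ ≤ f (x 1) := by
    obtain ⟨m, hmeq⟩ : ∃ m, jstar = m + 1 := ⟨jstar - 1, by omega⟩
    have hm := htel m (fun i h1i h2i => hmin' i h1i (by omega))
    rw [hmeq]
    push_cast
    linarith
  have hbound1 : (jstar : ℝ) ≤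
      1 + (M / ε₁ ^ (3 * α)) * (f (x 1) - f (x jstar)) := by
    have h1 : ((jstar : ℝ) - 1) * δ ≤ f (x 1) - f (x jstar) := by linarith
    have h2 : (jstar : ℝ) - 1 ≤ (M / ε₁ ^ (3 * α)) * (f (x 1) - f (x jstar)) := by
      calc (jstar : ℝ) - 1 = (((jstar : ℝ) - 1) * δ) * (M / ε₁ ^ (3 * α)) := by
            rw [hδ]
            field_simp
          _ ≤ (f (x 1) - f (x jstar)) * (M / ε₁ ^ (3 * α)) :=
            mul_le_mul_of_nonneg_right h1 (div_nonneg hMpos.le hε3.le)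
          _ = (M / ε₁ ^ (3 * α)) * (f (x 1) - f (x jstar)) := mul_comm _ _
    linarith
  have hD : f (x 1) - f (x jstar) ≤ Δ := by rw [hx1]; exact hΔ _
  have hbound2 : (jstar : ℝ) ≤ 1 + (M / ε₁ ^ (3 * α)) * Δ := by
    have := mul_le_mul_of_nonneg_left hD (div_nonneg hMpos.le hε3.le)
    linarith
  refine ⟨jstar, hj1, hjT, hmin', hbound1, hbound2, ?_⟩
  intro u hu
  obtain ⟨hl, hgs⟩ := hjT
  have h23 : ‖gradient f (x jstar)‖ ^ ((2:ℝ) / 3) ≤ ε₂ := by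
    calc ‖gradient f (x jstar)‖ ^ ((2:ℝ) / 3)
        ≤ (ε₁ ^ (3 * α / 2)) ^ ((2:ℝ) / 3) :=
          Real.rpow_le_rpow (norm_nonneg _) hgs (by norm_num)
      _ = ε₂ := by
          rw [hε₂, ← Real.rpow_mul hε₁.le]
          congr 1
          ring
  have hmx : max ε₂ (‖gradient f (x jstar)‖ ^ ((2:ℝ) / 3)) = ε₂ := max_eq_left h23
  have := hmin jstar hj1 u hu
  rw [hmx] at this
  linarith
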